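/- The double integral ∫₀^{2π} ∫₀^π (1/(16π)) · sin α · (sin(α/2))^{-3} · log((cos²β + sin²β · cos²α)^{1/2}) dα dβ equals √2 − 1 − log(1 + √2). -/

import Mathlib

open Real
open MeasureTheory Set intervalIntegral Filter


noncomputable def Gfun (t : ℝ) : ℝ := ∫ θ in (0:ℝ)..(2*π), Real.log (1 - 2*t*Real.cos θ + t^2)

lemma quad_pos {t : ℝ} (ht : |t| < 1) (θ : ℝ) : 0 < 1 - 2*t*Real.cos θ + t^2 := by
  have h1 : |Real.cos θ| ≤ 1 := Real.abs_cos_le_one θ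
  have h2 : t * Real.cos θ < 1 := by
    calc t * Real.cos θ ≤ |t * Real.cos θ| := le_abs_self _
    _ = |t| * |Real.cos θ| := abs_mul _ _
    _ ≤ |t| * 1 := by nlinarith [abs_nonneg t]
    _ < 1 := by linarith
  have h3 : Real.cos θ ^ 2 ≤ 1 := by
    calc Real.cos θ ^ 2 = |Real.cos θ|^2 := (sq_abs _).symm
    _ ≤ 1 := by nlinarith [abs_nonneg (Real.cos θ)]
  nlinarith [sq_nonneg (1 - t*Real.cos θ), mul_nonneg (sq_nonneg t) (sub_nonneg.2 h3)]

lemma quad_cont {t : ℝ} (ht : |t| < 1) :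
    Continuous fun θ : ℝ => Real.log (1 - 2*t*Real.cos θ + t^2) := by
  apply Continuous.log
  · continuity
  · exact fun θ => (quad_pos ht θ).ne'

lemma quad_periodic (t : ℝ) :
    Function.Periodic (fun θ : ℝ => Real.log (1 - 2*t*Real.cos θ + t^2)) (2*π) := by
  intro x
  simp [Real.cos_add_two_pi]

lemma G_neg {t : ℝ} (ht : |t| < 1) : Gfun (-t) = Gfun t := by
  have h1 : ∀ θ : ℝ, (1 - 2*(-t)*Real.cos θ + (-t)^2) = 1 - 2*t*Real.cos (θ + π) + t^2 := by
    intro θ; rw [Real.cos_add_pi]; ring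
  have : Gfun (-t) = ∫ θ in (0:ℝ)..(2*π), Real.log (1 - 2*t*Real.cos (θ + π) + t^2) := by
    unfold Gfun
    exact intervalIntegral.integral_congr (fun θ _ => by rw [h1])
  rw [this, intervalIntegral.integral_comp_add_right
    (fun θ => Real.log (1 - 2*t*Real.cos θ + t^2)) π]
  have h2 : (2*π + π) = π + 2*π := by ring
  rw [zero_add, h2]
  have := (quad_periodic t).intervalIntegral_add_eq π 0
  rw [this, zero_add]
  rfl

lemma G_double {t : ℝ} (ht : |t| < 1) : Gfun (t^2) = 2 * Gfun t := by
  have ht2 : |t^2| < 1 := by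
    rw [abs_pow]
    calc |t|^2 <= |t| * 1 := by nlinarith [abs_nonneg t]
    _ < 1 := by linarith
  have hint : IntervalIntegrable (fun x : ℝ => Real.log (1 - 2*t*Real.cos x + t^2))
      volume 0 (2*π) := (quad_cont ht).intervalIntegrable _ _
  have hintn : IntervalIntegrable (fun x : ℝ => Real.log (1 - 2*(-t)*Real.cos x + (-t)^2))
      volume 0 (2*π) := (quad_cont (by rwa [abs_neg])).intervalIntegrable _ _
  have key : Gfun t + Gfun (-t)
      = ∫ x in (0:ℝ)..(2*π), Real.log (1 - 2*(t^2)*Real.cos (2*x) + (t^2)^2) := by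
    unfold Gfun
    rw [← intervalIntegral.integral_add hint hintn]
    apply intervalIntegral.integral_congr
    intro x _
    have e1 : (0:ℝ) < 1 - 2*t*Real.cos x + t^2 := quad_pos ht x
    have e2 : (0:ℝ) < 1 - 2*(-t)*Real.cos x + (-t)^2 := quad_pos (by rwa [abs_neg]) x
    simp only
    rw [← Real.log_mul e1.ne' e2.ne']
    congr 1
    rw [Real.cos_two_mul]
    ring
  have sub : (∫ x in (0:ℝ)..(2*π), Real.log (1 - 2*(t^2)*Real.cos (2*x) + (t^2)^2))
      = Gfun (t^2) := by
    rw [intervalIntegral.integral_comp_mul_left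
      (fun u => Real.log (1 - 2*(t^2)*Real.cos u + (t^2)^2)) (two_ne_zero)]
    have hint2 : ∀ a b : ℝ, IntervalIntegrable
        (fun u : ℝ => Real.log (1 - 2*(t^2)*Real.cos u + (t^2)^2)) volume a b :=
      fun a b => (quad_cont ht2).intervalIntegrable _ _
    have hsplit : (∫ u in (2*0:ℝ)..(2*(2*π)), Real.log (1 - 2*(t^2)*Real.cos u + (t^2)^2))
        = (∫ u in (0:ℝ)..(2*π), Real.log (1 - 2*(t^2)*Real.cos u + (t^2)^2))
          + ∫ u in (2*π:ℝ)..(2*(2*π)), Real.log (1 - 2*(t^2)*Real.cos u + (t^2)^2) := by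
      rw [mul_zero]
      exact (intervalIntegral.integral_add_adjacent_intervals (hint2 0 (2*π))
        (hint2 (2*π) (2*(2*π)))).symm
    have hper : (∫ u in (2*π:ℝ)..(2*(2*π)), Real.log (1 - 2*(t^2)*Real.cos u + (t^2)^2))
        = ∫ u in (0:ℝ)..(2*π), Real.log (1 - 2*(t^2)*Real.cos u + (t^2)^2) := by
      have h4 : (2*(2*π):ℝ) = 2*π + 2*π := by ring
      have := (quad_periodic (t^2)).intervalIntegral_add_eq (2*π) 0
      rw [h4]
      rw [this, zero_add]
    rw [hsplit, hper]
    unfold Gfun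
    rw [smul_eq_mul]
    ring
  rw [G_neg ht] at key
  rw [← sub, ← key]
  ring

lemma G_pow {t : ℝ} (ht : |t| < 1) (n : ℕ) : Gfun t = Gfun (t^(2^n)) / 2^n := by
  induction n with
  | zero => simp
  | succ n ih =>
    have hs : |t^(2^n)| < 1 := by
      rw [abs_pow]
      rcases eq_or_ne t 0 with h | h
      · rw [h, abs_zero, zero_pow (Nat.two_pow_pos n).ne']; norm_num
      · exact pow_lt_one₀ (abs_nonneg t) ht (Nat.two_pow_pos n).ne'
    have h2 : (t^(2^n))^2 = t^(2^(n+1)) := by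
      rw [← pow_mul, ← pow_succ]
    have := G_double hs
    rw [h2] at this
    rw [ih, this]
    rw [pow_succ]
    field_simp

lemma G_bound {s : ℝ} (hs : |s| ≤ 1/2) : |Gfun s| ≤ Real.log 4 * (2*π) := by
  have habs : ∀ θ : ℝ, |Real.log (1 - 2*s*Real.cos θ + s^2)| ≤ Real.log 4 := by
    intro θ
    have h1 : |Real.cos θ| ≤ 1 := Real.abs_cos_le_one θ
    have hsc : |s * Real.cos θ| ≤ 1/2 := by
      rw [abs_mul]
      calc |s| * |Real.cos θ| ≤ |s| * 1 := by nlinarith [abs_nonneg s]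
      _ ≤ 1/2 := by linarith
    have hsc1 : s * Real.cos θ ≤ 1/2 := le_trans (le_abs_self _) hsc
    have hsc2 : -(1/2) ≤ s * Real.cos θ := neg_le_of_abs_le hsc
    have hs2 : s^2 ≤ 1/4 := by
      rw [← sq_abs]
      nlinarith [abs_nonneg s]
    have hup : 1 - 2*s*Real.cos θ + s^2 ≤ 4 := by nlinarith
    have h5 : s * Real.cos θ ≤ |s| := by
      calc s * Real.cos θ ≤ |s * Real.cos θ| := le_abs_self _
      _ = |s| * |Real.cos θ| := abs_mul _ _
      _ ≤ |s| * 1 := by nlinarith [abs_nonneg s]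
      _ = |s| := mul_one _
    have hlo : (1:ℝ)/4 ≤ 1 - 2*s*Real.cos θ + s^2 := by
      nlinarith [h5, sq_abs s,
        mul_nonneg (by linarith : (0:ℝ) ≤ 1/2 - |s|)
          (by linarith [abs_nonneg s] : (0:ℝ) ≤ 3/2 - |s|)]
    have hpos : (0:ℝ) < 1 - 2*s*Real.cos θ + s^2 := by linarith
    rw [abs_le]
    constructor
    · have hll := Real.log_le_log (by norm_num : (0:ℝ) < 1/4) hlo
      rw [show ((1:ℝ)/4) = 4⁻¹ by norm_num, Real.log_inv] at hll
      linarith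
    · exact Real.log_le_log hpos hup
  have := intervalIntegral.norm_integral_le_of_norm_le_const
    (C := Real.log 4) (f := fun θ : ℝ => Real.log (1 - 2*s*Real.cos θ + s^2))
    (a := 0) (b := 2*π) (fun x _ => habs x)
  unfold Gfun
  calc |∫ θ in (0:ℝ)..(2*π), Real.log (1 - 2*s*Real.cos θ + s^2)|
      ≤ Real.log 4 * |2*π - 0| := this
  _ = Real.log 4 * (2*π) := by
      rw [sub_zero, abs_of_nonneg (by positivity)]

lemma G_zero {t : ℝ} (ht : |t| < 1) : Gfun t = 0 := by
  obtain ⟨k, hk⟩ := exists_pow_lt_of_lt_one (by norm_num : (0:ℝ) < 1/2) ht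
  have hbd : ∀ n : ℕ, k ≤ 2^n → |Gfun t| ≤ (Real.log 4 * (2*π)) / 2^n := by
    intro n hn
    have hsmall : |t^(2^n)| ≤ 1/2 := by
      rw [abs_pow]
      calc |t|^(2^n) ≤ |t|^k := pow_le_pow_of_le_one (abs_nonneg t) ht.le hn
      _ ≤ 1/2 := hk.le
    have := G_pow ht n
    rw [this, abs_div, abs_of_nonneg (by positivity : (0:ℝ) ≤ (2:ℝ)^n)]
    apply div_le_div_of_nonneg_right (G_bound hsmall) (by positivity)
  have hev : ∀ᶠ n : ℕ in atTop, |Gfun t| ≤ (Real.log 4 * (2*π)) / 2^n := by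
    filter_upwards [Filter.eventually_atTop.mpr ⟨k, fun n hn => hn⟩] with n hn
    exact hbd n (le_trans hn (Nat.le_of_lt (Nat.lt_two_pow_self)))
  have hlim : Tendsto (fun n : ℕ => (Real.log 4 * (2*π)) / 2^n) atTop (nhds 0) := by
    simpa using tendsto_const_nhds.div_atTop (tendsto_pow_atTop_atTop_of_one_lt
      (by norm_num : (1:ℝ) < 2))
  have : |Gfun t| ≤ 0 := ge_of_tendsto hlim hev
  have h0 : |Gfun t| = 0 := le_antisymm this (abs_nonneg _)
  exact abs_eq_zero.mp h0

lemma G_comp_two {u : ℝ} (hu : |u| < 1) :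
    (∫ x in (0:ℝ)..(2*π), Real.log (1 - 2*u*Real.cos (2*x) + u^2)) = Gfun u := by
  rw [intervalIntegral.integral_comp_mul_left
    (fun v => Real.log (1 - 2*u*Real.cos v + u^2)) (two_ne_zero)]
  have hint2 : ∀ a b : ℝ, IntervalIntegrable
      (fun v : ℝ => Real.log (1 - 2*u*Real.cos v + u^2)) volume a b :=
    fun a b => (quad_cont hu).intervalIntegrable _ _
  have hsplit : (∫ v in (2*0:ℝ)..(2*(2*π)), Real.log (1 - 2*u*Real.cos v + u^2))
      = (∫ v in (0:ℝ)..(2*π), Real.log (1 - 2*u*Real.cos v + u^2))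
        + ∫ v in (2*π:ℝ)..(2*(2*π)), Real.log (1 - 2*u*Real.cos v + u^2) := by
    rw [mul_zero]
    exact (intervalIntegral.integral_add_adjacent_intervals (hint2 0 (2*π))
      (hint2 (2*π) (2*(2*π)))).symm
  have hper : (∫ v in (2*π:ℝ)..(2*(2*π)), Real.log (1 - 2*u*Real.cos v + u^2))
      = ∫ v in (0:ℝ)..(2*π), Real.log (1 - 2*u*Real.cos v + u^2) := by
    have h4 : (2*(2*π):ℝ) = 2*π + 2*π := by ring
    have := (quad_periodic u).intervalIntegral_add_eq (2*π) 0
    rw [h4, this, zero_add]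
  rw [hsplit, hper]
  unfold Gfun
  rw [smul_eq_mul]
  ring

lemma betaInt {c : ℝ} (hc0 : 0 < c) (hc1 : c ≤ 1) :
    (∫ β in (0:ℝ)..(2*π), Real.log (Real.cos β^2 + c^2 * Real.sin β^2))
      = 4*π*Real.log ((1+c)/2) := by
  have h1c : (0:ℝ) < 1 + c := by linarith
  set t : ℝ := (1-c)/(1+c) with htdef
  have ht0 : 0 ≤ t := div_nonneg (by linarith) h1c.le
  have ht1 : t < 1 := by
    rw [div_lt_one h1c]; linarith
  have htabs : |(-t)| < 1 := by rw [abs_neg, abs_of_nonneg ht0]; exact ht1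
  have key : ∀ β : ℝ, Real.cos β^2 + c^2*Real.sin β^2
      = ((1+c)/2)^2 * (1 - 2*(-t)*Real.cos (2*β) + (-t)^2) := by
    intro β
    have hs : Real.sin β^2 = 1 - Real.cos β^2 := by
      nlinarith [Real.sin_sq_add_cos_sq β]
    rw [Real.cos_two_mul, hs, htdef]
    field_simp
    ring
  have hA : (0:ℝ) < ((1+c)/2)^2 := by positivity
  have hsum : (∫ β in (0:ℝ)..(2*π), Real.log (Real.cos β^2 + c^2 * Real.sin β^2))
      = (∫ β in (0:ℝ)..(2*π), (Real.log (((1+c)/2)^2)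
          + Real.log (1 - 2*(-t)*Real.cos (2*β) + (-t)^2))) := by
    apply intervalIntegral.integral_congr
    intro β _
    simp only
    rw [key β, Real.log_mul hA.ne' (quad_pos htabs (2*β)).ne']
  rw [hsum]
  have hint1 : IntervalIntegrable (fun _ : ℝ => Real.log (((1+c)/2)^2)) volume 0 (2*π) :=
    intervalIntegrable_const
  have hint2 : IntervalIntegrable
      (fun β : ℝ => Real.log (1 - 2*(-t)*Real.cos (2*β) + (-t)^2)) volume 0 (2*π) := by
    apply Continuous.intervalIntegrable
    apply Continuous.log
    · continuity
    · exact fun β => (quad_pos htabs (2*β)).ne'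
  rw [intervalIntegral.integral_add hint1 hint2]
  rw [intervalIntegral.integral_const, G_comp_two htabs, G_zero htabs]
  rw [smul_eq_mul, sub_zero, add_zero]
  rw [show (((1+c)/2)^2 : ℝ) = ((1+c)/2)^(2:ℕ) by norm_num, Real.log_pow]
  push_cast
  ring

noncomputable def Kfun (α : ℝ) : ℝ :=
  (1/8) * Real.sin α * (Real.sin (α/2))^(-3:ℤ) * Real.log ((1+|Real.cos α|)/2)

noncomputable def H1 (α : ℝ) : ℝ :=
  -(1/2) * Real.log (1 - Real.sin (α/2)^2) / Real.sin (α/2)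
  - (1/2) * Real.log (1 + Real.sin (α/2)) + (1/2) * Real.log (1 - Real.sin (α/2))

lemma sin_half_deriv (α : ℝ) :
    HasDerivAt (fun x : ℝ => Real.sin (x/2)) (Real.cos (α/2) * (1/2)) α := by
  have h1 : HasDerivAt (fun x : ℝ => x/2) (1/2) α := (hasDerivAt_id α).div_const 2
  exact (Real.hasDerivAt_sin (α/2)).comp α h1

lemma H1_deriv {α : ℝ} (hα : α ∈ Ioc 0 (π/2)) : HasDerivAt H1 (Kfun α) α := by
  obtain ⟨h0, hhalf⟩ := hα
  have hpi := Real.pi_pos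
  set s := Real.sin (α/2) with hsdef
  have hs0 : 0 < s := Real.sin_pos_of_pos_of_lt_pi (by linarith) (by linarith)
  have hc0 : 0 < Real.cos (α/2) := Real.cos_pos_of_mem_Ioo ⟨by linarith, by linarith⟩
  have hsc : s^2 + Real.cos (α/2)^2 = 1 := Real.sin_sq_add_cos_sq (α/2)
  have hs1 : s < 1 := by nlinarith
  have h1ms : (0:ℝ) < 1 - s^2 := by nlinarith
  have h1ps : (0:ℝ) < 1 + s := by linarith
  have h1mss : (0:ℝ) < 1 - s := by linarith
  have hds := sin_half_deriv α
  have hA1 : HasDerivAt (fun x : ℝ => 1 - Real.sin (x/2)^2)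
      (-(2 * s^1 * (Real.cos (α/2) * (1/2)))) α := (hds.pow 2).const_sub 1
  have hA2 : HasDerivAt (fun x : ℝ => Real.log (1 - Real.sin (x/2)^2))
      ((-(2 * s^1 * (Real.cos (α/2) * (1/2)))) / (1 - s^2)) α := hA1.log h1ms.ne'
  have hA3 : HasDerivAt (fun x : ℝ => -(1/2) * Real.log (1 - Real.sin (x/2)^2))
      (-(1/2) * ((-(2 * s^1 * (Real.cos (α/2) * (1/2)))) / (1 - s^2))) α :=
    hA2.const_mul _
  have hA : HasDerivAt (fun x : ℝ => -(1/2) * Real.log (1 - Real.sin (x/2)^2) / Real.sin (x/2))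
      (((-(1/2) * ((-(2 * s^1 * (Real.cos (α/2) * (1/2)))) / (1 - s^2))) * s
        - (-(1/2) * Real.log (1 - s^2)) * (Real.cos (α/2) * (1/2))) / s^2) α :=
    hA3.div hds hs0.ne'
  have hB : HasDerivAt (fun x : ℝ => (1/2) * Real.log (1 + Real.sin (x/2)))
      ((1/2) * ((Real.cos (α/2) * (1/2)) / (1 + s))) α :=
    ((hds.const_add 1).log h1ps.ne').const_mul _
  have hC : HasDerivAt (fun x : ℝ => (1/2) * Real.log (1 - Real.sin (x/2)))
      ((1/2) * ((-(Real.cos (α/2) * (1/2))) / (1 - s))) α :=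
    ((hds.const_sub 1).log h1mss.ne').const_mul _
  have hH := (hA.sub hB).add hC
  have hKval : Kfun α
      = (((-(1/2) * ((-(2 * s^1 * (Real.cos (α/2) * (1/2)))) / (1 - s^2))) * s
        - (-(1/2) * Real.log (1 - s^2)) * (Real.cos (α/2) * (1/2))) / s^2)
        - ((1/2) * ((Real.cos (α/2) * (1/2)) / (1 + s)))
        + ((1/2) * ((-(Real.cos (α/2) * (1/2))) / (1 - s))) := by
    have hcosnn : (0:ℝ) ≤ Real.cos α := Real.cos_nonneg_of_mem_Icc ⟨by linarith, by linarith⟩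
    have hsin2 : Real.sin α = 2 * s * Real.cos (α/2) := by
      have h := Real.sin_two_mul (α/2)
      rw [show 2*(α/2) = α by ring] at h
      rw [h]
    have hcos2 : Real.cos α = 1 - 2*s^2 := by
      have h := Real.cos_two_mul (α/2)
      rw [show 2*(α/2) = α by ring] at h
      rw [h]; nlinarith
    unfold Kfun
    rw [abs_of_nonneg hcosnn, hsin2, hcos2, ← hsdef]
    rw [show ((1 + (1 - 2*s^2))/2 : ℝ) = 1 - s^2 by ring]
    rw [zpow_neg, zpow_ofNat]
    field_simp
    ring
  rw [hKval]
  exact hH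

lemma H1_tendsto_zero : Filter.Tendsto H1 (nhdsWithin 0 (Ioi 0)) (nhds 0) := by
  have hpi := Real.pi_pos
  have hmem : Ioo (0:ℝ) π ∈ nhdsWithin (0:ℝ) (Ioi 0) :=
    Ioo_mem_nhdsGT_of_mem ⟨le_refl 0, hpi⟩
  have hspos : ∀ α ∈ Ioo (0:ℝ) π, 0 < Real.sin (α/2) := by
    intro α hα
    exact Real.sin_pos_of_pos_of_lt_pi (by linarith [hα.1]) (by linarith [hα.2])
  have hs_tendsto : Filter.Tendsto (fun α : ℝ => Real.sin (α/2))
      (nhdsWithin 0 (Ioi 0)) (nhds 0) := by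
    have : Continuous fun α : ℝ => Real.sin (α/2) := by continuity
    have h := this.tendsto 0
    simpa using h.mono_left nhdsWithin_le_nhds
  -- slope limit : log(1-y)/y → -1 as y → 0 (punctured)
  have hslope : Filter.Tendsto (fun y : ℝ => Real.log (1-y)/y)
      (nhdsWithin 0 {(0:ℝ)}ᶜ) (nhds (-1)) := by
    have hd : HasDerivAt (fun x : ℝ => Real.log (1-x)) (-1) 0 := by
      have h := ((hasDerivAt_id (0:ℝ)).const_sub 1).log (by norm_num)
      simpa using h
    rw [hasDerivAt_iff_tendsto_slope] at hd
    apply hd.congr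
    intro y
    simp [slope_def_field, div_eq_mul_inv]
  have hcont2 : Continuous fun α : ℝ => Real.sin (α/2)^2 :=
    (Real.continuous_sin.comp (continuous_id.div_const 2)).pow 2
  have hbase : Filter.Tendsto (fun α : ℝ => Real.sin (α/2)^2)
      (nhdsWithin 0 (Ioi 0)) (nhds 0) := by
    have h := hcont2.tendsto 0
    rw [show Real.sin ((0:ℝ)/2)^2 = 0 by simp] at h
    exact h.mono_left nhdsWithin_le_nhds
  have hsq_tendsto : Filter.Tendsto (fun α : ℝ => Real.sin (α/2)^2)
      (nhdsWithin 0 (Ioi 0)) (nhdsWithin 0 {(0:ℝ)}ᶜ) := by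
    rw [tendsto_nhdsWithin_iff]
    refine ⟨hbase, ?_⟩
    filter_upwards [hmem] with α hα
    simp only [Set.mem_compl_iff, Set.mem_singleton_iff]
    exact pow_ne_zero 2 (hspos α hα).ne'
  have t1 : Filter.Tendsto (fun α : ℝ => Real.log (1 - Real.sin (α/2)^2)/(Real.sin (α/2)^2))
      (nhdsWithin 0 (Ioi 0)) (nhds (-1)) := hslope.comp hsq_tendsto
  have term1 : Filter.Tendsto
      (fun α : ℝ => -(1/2) * Real.log (1 - Real.sin (α/2)^2) / Real.sin (α/2))
      (nhdsWithin 0 (Ioi 0)) (nhds 0) := by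
    have tprod : Filter.Tendsto
        (fun α : ℝ => -(1/2) * (Real.log (1 - Real.sin (α/2)^2)/(Real.sin (α/2)^2)
          * Real.sin (α/2)))
        (nhdsWithin 0 (Ioi 0)) (nhds (-(1/2) * (-1 * 0))) :=
      (t1.mul hs_tendsto).const_mul _
    rw [show (-(1/2) * (-1 * 0) : ℝ) = 0 by ring] at tprod
    apply tprod.congr'
    filter_upwards [hmem] with α hα
    have hs := (hspos α hα).ne'
    field_simp
  have term2 : Filter.Tendsto (fun α : ℝ => (1/2) * Real.log (1 + Real.sin (α/2)))
      (nhdsWithin 0 (Ioi 0)) (nhds 0) := by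
    have hca : ContinuousAt (fun α : ℝ => (1/2) * Real.log (1 + Real.sin (α/2))) 0 := by
      apply ContinuousAt.mul continuousAt_const
      apply ContinuousAt.log
      · exact Continuous.continuousAt
          (continuous_const.add (Real.continuous_sin.comp (continuous_id.div_const 2)))
      · simp
    have h : Filter.Tendsto (fun α : ℝ => (1/2) * Real.log (1 + Real.sin (α/2)))
        (nhdsWithin 0 (Ioi 0)) (nhds ((1/2) * Real.log (1 + Real.sin ((0:ℝ)/2)))) :=
      hca.tendsto.mono_left nhdsWithin_le_nhds
    rw [show ((1:ℝ)/2) * Real.log (1 + Real.sin ((0:ℝ)/2)) = 0 by simp] at h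
    exact h
  have term3 : Filter.Tendsto (fun α : ℝ => (1/2) * Real.log (1 - Real.sin (α/2)))
      (nhdsWithin 0 (Ioi 0)) (nhds 0) := by
    have hca : ContinuousAt (fun α : ℝ => (1/2) * Real.log (1 - Real.sin (α/2))) 0 := by
      apply ContinuousAt.mul continuousAt_const
      apply ContinuousAt.log
      · exact Continuous.continuousAt
          (continuous_const.sub (Real.continuous_sin.comp (continuous_id.div_const 2)))
      · simp
    have h : Filter.Tendsto (fun α : ℝ => (1/2) * Real.log (1 - Real.sin (α/2)))
        (nhdsWithin 0 (Ioi 0)) (nhds ((1/2) * Real.log (1 - Real.sin ((0:ℝ)/2)))) :=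
      hca.tendsto.mono_left nhdsWithin_le_nhds
    rw [show ((1:ℝ)/2) * Real.log (1 - Real.sin ((0:ℝ)/2)) = 0 by simp] at h
    exact h
  have hfin := (term1.sub term2).add term3
  rw [show ((0:ℝ) - 0 + 0) = 0 by ring] at hfin
  exact hfin

lemma K_meas : Measurable Kfun := by
  unfold Kfun
  measurability

set_option maxHeartbeats 1000000 in
lemma K_abs_le {α : ℝ} (hα : α ∈ Ioc 0 π) : |Kfun α| ≤ 1 := by
  obtain ⟨h0, hπ⟩ := hα
  have hpi := Real.pi_pos
  set s := Real.sin (α/2) with hsdef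
  have hs0 : 0 < s := Real.sin_pos_of_pos_of_lt_pi (by linarith) (by linarith)
  have hs1 : s ≤ 1 := Real.sin_le_one _
  have hsinα0 : 0 ≤ Real.sin α := Real.sin_nonneg_of_nonneg_of_le_pi h0.le hπ
  have hsin2 : Real.sin α = 2 * s * Real.cos (α/2) := by
    have h := Real.sin_two_mul (α/2)
    rw [show 2*(α/2) = α by ring] at h
    rw [h]
  have hcos2 : Real.cos α = 1 - 2*s^2 := by
    have h := Real.cos_two_mul (α/2)
    have hsc := Real.sin_sq_add_cos_sq (α/2)
    rw [show 2*(α/2) = α by ring] at h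
    rw [h]; nlinarith
  have hcos_half : Real.cos (α/2) ≤ 1 := Real.cos_le_one _
  have hcos_half0 : 0 ≤ Real.cos (α/2) :=
    Real.cos_nonneg_of_mem_Icc ⟨by linarith, by linarith⟩
  have hxpos : (0:ℝ) < (1+|Real.cos α|)/2 := by positivity
  have hx1 : (1+|Real.cos α|)/2 ≤ 1 := by
    have := Real.abs_cos_le_one α
    linarith
  have hlog_le : Real.log ((1+|Real.cos α|)/2) ≤ 0 := Real.log_nonpos hxpos.le hx1
  set t : ℝ := -Real.log ((1+|Real.cos α|)/2) with htdef
  have ht0 : 0 ≤ t := by simp [htdef]; linarith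
  have habs : |Kfun α| = (1/8) * Real.sin α * (s^3)⁻¹ * t := by
    unfold Kfun
    rw [zpow_neg, zpow_ofNat, ← hsdef]
    rw [abs_mul, abs_mul, abs_mul]
    rw [abs_of_nonneg (by norm_num : (0:ℝ) ≤ (1:ℝ)/8), abs_of_nonneg hsinα0,
      abs_of_nonneg (by positivity : (0:ℝ) ≤ (s^3)⁻¹), abs_of_nonpos hlog_le]
  clear_value s t
  -- key inequality : (1/8) * sin α * t ≤ s^3
  have hkey : (1/8) * Real.sin α * t ≤ s^3 := by
    rcases le_or_gt 0 (Real.cos α) with hc | hc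
    · -- α ≤ π/2 case : x = 1 - s^2, s^2 ≤ 1/2
      have hs2 : s^2 ≤ 1/2 := by nlinarith [hcos2]
      have hxeq : (1+|Real.cos α|)/2 = 1 - s^2 := by
        rw [abs_of_nonneg hc, hcos2]; ring
      have h1ms : (0:ℝ) < 1 - s^2 := by nlinarith
      have htle : t ≤ 2*s^2 := by
        rw [htdef, hxeq, ← Real.log_inv]
        have hlb := Real.log_le_sub_one_of_pos (x := (1-s^2)⁻¹) (by positivity)
        have : (1-s^2)⁻¹ - 1 = s^2/(1-s^2) := by field_simp; ring
        rw [this] at hlb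
        have : s^2/(1-s^2) ≤ 2*s^2 := by
          rw [div_le_iff₀ h1ms]
          nlinarith [sq_nonneg s]
        linarith
      have hsle : Real.sin α ≤ 2*s := by
        rw [hsin2]; nlinarith
      have hm : Real.sin α * t ≤ (2*s) * (2*s^2) := mul_le_mul hsle htle ht0 (by linarith)
      have hcube : (0:ℝ) ≤ s^3 := by positivity
      calc (1/8) * Real.sin α * t = (1/8)*(Real.sin α * t) := by ring
      _ ≤ (1/8)*((2*s)*(2*s^2)) := by linarith
      _ = s^3/2 := by ring
      _ ≤ s^3 := by linarith
    · -- α > π/2 case : x = s^2, s ≥ 7/10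
      have hs2 : (1:ℝ)/2 < s^2 := by nlinarith [hcos2]
      have hs7 : (7:ℝ)/10 < s := by nlinarith
      have hxeq : (1+|Real.cos α|)/2 = s^2 := by
        rw [abs_of_nonpos hc.le, hcos2]; ring
      have htle : t ≤ 2*(1-s)/s := by
        rw [htdef, hxeq]
        have hlog2 : Real.log (s^2) = 2 * Real.log s := by
          rw [show s^2 = s^(2:ℕ) by norm_num, Real.log_pow]; push_cast; ring
        rw [hlog2]
        have hlb := Real.log_le_sub_one_of_pos (x := s⁻¹) (by positivity)
        rw [Real.log_inv] at hlb
        have h1 : s⁻¹ - 1 = (1-s)/s := by field_simp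
        rw [h1] at hlb
        calc -(2*Real.log s) = 2*(-Real.log s) := by ring
        _ ≤ 2*((1-s)/s) := by linarith
        _ = 2*(1-s)/s := by ring
      have hsle1 : Real.sin α ≤ 1 := Real.sin_le_one _
      have h1ms : 0 ≤ 1 - s := by linarith
      have ht2 : t ≤ 2*(1-s)/s := htle
      have hineq : 1 - s ≤ 4*s^4 := by nlinarith [hs7, sq_nonneg s, sq_nonneg (s - 7/10)]
      have hm : Real.sin α * t ≤ 1 * (2*(1-s)/s) :=
        mul_le_mul hsle1 ht2 ht0 zero_le_one
      rw [one_mul] at hm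
      have hm2 : s * (Real.sin α * t) ≤ 2*(1-s) := by
        have h := mul_le_mul_of_nonneg_left hm hs0.le
        rwa [mul_div_cancel₀ _ hs0.ne'] at h
      have h8 : s * (Real.sin α * t) ≤ s * (8 * s^3) := by nlinarith [hm2, hineq]
      have h9 : Real.sin α * t ≤ 8 * s^3 := le_of_mul_le_mul_left h8 hs0
      linarith
  rw [habs]
  have hs3 : (0:ℝ) < s^3 := by positivity
  calc (1/8) * Real.sin α * (s^3)⁻¹ * t = ((1/8) * Real.sin α * t) * (s^3)⁻¹ := by ring
  _ ≤ s^3 * (s^3)⁻¹ := mul_le_mul_of_nonneg_right hkey (by positivity)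
  _ = 1 := mul_inv_cancel₀ hs3.ne'

lemma K_integrableOn : IntegrableOn Kfun (Ioc 0 π) := by
  apply Integrable.mono' (g := fun _ : ℝ => (1:ℝ))
  · exact integrableOn_const measure_Ioc_lt_top.ne
  · exact K_meas.aestronglyMeasurable.restrict
  · rw [ae_restrict_iff' measurableSet_Ioc]
    exact Filter.Eventually.of_forall (fun α hα => by
      rw [Real.norm_eq_abs]; exact K_abs_le hα)

lemma K_ii {a b : ℝ} (ha : 0 ≤ a) (hab : a ≤ b) (hb : b ≤ π) :
    IntervalIntegrable Kfun volume a b := by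
  rw [intervalIntegrable_iff_integrableOn_Ioc_of_le hab]
  exact K_integrableOn.mono_set (Ioc_subset_Ioc ha hb)

lemma sqrt_two_facts : (Real.sqrt 2)^2 = 2 ∧ 1 < Real.sqrt 2 ∧ Real.sqrt 2 < 2 := by
  have h2 : (Real.sqrt 2)^2 = 2 := Real.sq_sqrt (by norm_num)
  have h0 : 0 < Real.sqrt 2 := Real.sqrt_pos.mpr (by norm_num)
  refine ⟨h2, by nlinarith, by nlinarith⟩

lemma H1_eval : H1 (π/2) = Real.sqrt 2/2 * Real.log 2 - Real.log (1+Real.sqrt 2) := by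
  obtain ⟨hr2, hr1, hrlt2⟩ := sqrt_two_facts
  set r := Real.sqrt 2 with hrdef
  clear_value r
  have hr0 : (0:ℝ) < r := by linarith
  unfold H1
  rw [show (π/2)/2 = π/4 by ring, Real.sin_pi_div_four, ← hrdef]
  have e1 : 1 - (r/2)^2 = 1/2 := by
    have : (r/2)^2 = 1/2 := by
      rw [div_pow, hr2]; norm_num
    rw [this]; norm_num
  rw [e1]
  have e2 : Real.log (1/2) = -Real.log 2 := by
    rw [show (1/2:ℝ) = 2⁻¹ by norm_num, Real.log_inv]
  rw [e2]
  have h1p : (0:ℝ) < 1 + r/2 := by linarith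
  have h1m : (0:ℝ) < 1 - r/2 := by linarith
  have h1r : (0:ℝ) < 1 + r := by linarith
  have e3 : Real.log (1 - r/2) - Real.log (1 + r/2) = -(2*Real.log (1+r)) := by
    rw [← Real.log_div h1m.ne' h1p.ne']
    have e4 : (1 - r/2)/(1 + r/2) = ((1+r)^2)⁻¹ := by
      rw [div_eq_iff h1p.ne']
      have h2 : ((1+r)^2) ≠ 0 := by positivity
      field_simp
      linear_combination (-r) * hr2
    rw [e4, Real.log_inv]
    rw [show ((1+r)^2 : ℝ) = (1+r)^(2:ℕ) by norm_num, Real.log_pow]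
    push_cast
    ring
  have hlogr : Real.log 2 / r = r/2 * Real.log 2 := by
    rw [div_eq_iff hr0.ne']
    linear_combination (-(Real.log 2)/2) * hr2
  calc -(1/2) * -Real.log 2 / (r/2) - 1/2 * Real.log (1 + r/2) + 1/2 * Real.log (1 - r/2)
      = Real.log 2 / r + (1/2)*(Real.log (1 - r/2) - Real.log (1 + r/2)) := by
        field_simp
        ring
  _ = Real.log 2 / r + (1/2)*(-(2*Real.log (1+r))) := by rw [e3]
  _ = Real.log 2 / r - Real.log (1+r) := by ring
  _ = r/2 * Real.log 2 - Real.log (1+r) := by rw [hlogr]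

lemma piece1 : ∫ α in (0:ℝ)..(π/2), Kfun α
    = Real.sqrt 2/2 * Real.log 2 - Real.log (1+Real.sqrt 2) := by
  have hpi := Real.pi_pos
  have hab : (0:ℝ) < π/2 := by linarith
  have hderiv : ∀ x ∈ Ioo (0:ℝ) (π/2), HasDerivAt H1 (Kfun x) x :=
    fun x hx => H1_deriv ⟨hx.1, hx.2.le⟩
  have hint : IntervalIntegrable Kfun volume 0 (π/2) :=
    K_ii (le_refl 0) hab.le (by linarith)
  have hb : Filter.Tendsto H1 (nhdsWithin (π/2) (Iio (π/2))) (nhds (H1 (π/2))) := by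
    have hca : ContinuousAt H1 (π/2) :=
      (H1_deriv (α := π/2) ⟨hab, le_refl _⟩).continuousAt
    exact hca.tendsto.mono_left nhdsWithin_le_nhds
  have := intervalIntegral.integral_eq_sub_of_hasDerivAt_of_tendsto hab hderiv hint
    H1_tendsto_zero hb
  rw [this, H1_eval, sub_zero]

noncomputable def H2 (α : ℝ) : ℝ := -(Real.log (Real.sin (α/2)) + 1)/ Real.sin (α/2)

lemma H2_deriv {α : ℝ} (hα : α ∈ Icc (π/2) π) : HasDerivAt H2 (Kfun α) α := by
  obtain ⟨hl, hr⟩ := hα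
  have hpi := Real.pi_pos
  set s := Real.sin (α/2) with hsdef
  have hs0 : 0 < s := Real.sin_pos_of_pos_of_lt_pi (by linarith) (by linarith)
  have hds := sin_half_deriv α
  have hnum : HasDerivAt (fun x : ℝ => -(Real.log (Real.sin (x/2)) + 1))
      (-(Real.cos (α/2) * (1/2)/s)) α := ((hds.log hs0.ne').add_const 1).neg
  have hH : HasDerivAt H2
      (((-(Real.cos (α/2) * (1/2)/s)) * s
        - (-(Real.log s + 1)) * (Real.cos (α/2) * (1/2))) / s^2) α :=
    hnum.div hds hs0.ne'
  have hKval : Kfun α = ((-(Real.cos (α/2) * (1/2)/s)) * s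
        - (-(Real.log s + 1)) * (Real.cos (α/2) * (1/2))) / s^2 := by
    have hcosneg : Real.cos α ≤ 0 :=
      Real.cos_nonpos_of_pi_div_two_le_of_le hl (by linarith)
    have hsin2 : Real.sin α = 2 * s * Real.cos (α/2) := by
      have h := Real.sin_two_mul (α/2)
      rw [show 2*(α/2) = α by ring] at h
      rw [h]
    have hcos2 : Real.cos α = 1 - 2*s^2 := by
      have h := Real.cos_two_mul (α/2)
      have hsc := Real.sin_sq_add_cos_sq (α/2)
      rw [show 2*(α/2) = α by ring] at h
      rw [h]; nlinarith
    unfold Kfun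
    rw [abs_of_nonpos hcosneg, hcos2, hsin2, ← hsdef]
    rw [show ((1 + -(1 - 2*s^2))/2 : ℝ) = s^2 by ring]
    have hlog2 : Real.log (s^2) = 2 * Real.log s := by
      rw [show s^2 = s^(2:ℕ) by norm_num, Real.log_pow]; push_cast; ring
    rw [hlog2, zpow_neg, zpow_ofNat]
    field_simp
    ring
  rw [hKval]
  exact hH

lemma H2_eval : H2 π - H2 (π/2) = Real.sqrt 2 - 1 - Real.sqrt 2/2 * Real.log 2 := by
  obtain ⟨hr2, hr1, hrlt2⟩ := sqrt_two_facts
  have hr0 : (0:ℝ) < Real.sqrt 2 := by linarith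
  unfold H2
  rw [show (π:ℝ)/2/2 = π/4 by ring, show (π:ℝ)/2 = π/2 by ring]
  rw [Real.sin_pi_div_four]
  rw [show Real.sin (π/2) = 1 from Real.sin_pi_div_two]
  set r := Real.sqrt 2 with hrdef
  clear_value r
  have hlogr2 : Real.log (r/2) = -(Real.log 2)/2 := by
    rw [hrdef, show Real.sqrt 2/2 = Real.sqrt 2 * 2⁻¹ by ring, Real.log_mul
      (by positivity) (by norm_num), Real.log_inv, Real.log_sqrt (by norm_num)]
    ring
  rw [hlogr2]
  rw [Real.log_one]
  have hr2ne : r/2 ≠ 0 := by positivity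
  field_simp
  linear_combination (Real.log 2 - 2) * hr2

lemma piece2 : ∫ α in (π/2:ℝ)..π, Kfun α
    = Real.sqrt 2 - 1 - Real.sqrt 2/2 * Real.log 2 := by
  have hpi := Real.pi_pos
  have hle : (π/2:ℝ) ≤ π := by linarith
  have hderiv : ∀ x ∈ Set.uIcc (π/2:ℝ) π, HasDerivAt H2 (Kfun x) x := by
    intro x hx
    rw [Set.uIcc_of_le hle] at hx
    exact H2_deriv hx
  have hint : IntervalIntegrable Kfun volume (π/2) π :=
    K_ii (by linarith) hle (le_refl _)
  rw [intervalIntegral.integral_eq_sub_of_hasDerivAt hderiv hint, H2_eval]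

lemma alphaInt : ∫ α in (0:ℝ)..π, Kfun α
    = Real.sqrt 2 - 1 - Real.log (1+Real.sqrt 2) := by
  have hpi := Real.pi_pos
  have h1 : IntervalIntegrable Kfun volume 0 (π/2) := K_ii (le_refl 0) (by linarith) (by linarith)
  have h2 : IntervalIntegrable Kfun volume (π/2) π := K_ii (by linarith) (by linarith) (le_refl _)
  rw [← intervalIntegral.integral_add_adjacent_intervals h1 h2, piece1, piece2]
  ring

noncomputable def Ffun (β α : ℝ) : ℝ :=
  (1/(16*π)) * Real.sin α * (Real.sin (α/2)) ^ (-3 : ℤ) *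
    Real.log (Real.sqrt (Real.cos β ^ 2 + Real.sin β ^ 2 * Real.cos α ^ 2))

lemma g_le_one (β α : ℝ) : Real.cos β^2 + Real.sin β^2 * Real.cos α^2 ≤ 1 := by
  have h1 := Real.sin_sq_add_cos_sq β
  have h2 := Real.sin_sq_add_cos_sq α
  nlinarith [sq_nonneg (Real.sin β), sq_nonneg (Real.sin α)]

lemma g_ge (β α : ℝ) : Real.cos α^2 ≤ Real.cos β^2 + Real.sin β^2 * Real.cos α^2 := by
  have h1 := Real.sin_sq_add_cos_sq β
  have h2 := Real.sin_sq_add_cos_sq α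
  nlinarith [sq_nonneg (Real.cos β), sq_nonneg (Real.sin α)]

lemma cos_ne_zero_of {α : ℝ} (hmem : α ∈ Ioc 0 π) (hne : α ≠ π/2) : Real.cos α ≠ 0 := by
  intro hc
  have hpi := Real.pi_pos
  obtain ⟨n, hn⟩ := Real.cos_eq_zero_iff.mp hc
  obtain ⟨h0, hπ⟩ := hmem
  rw [hn] at h0 hπ hne
  have hq : (0:ℝ) < π/2 := by linarith
  have hb1 : (0:ℝ) < 2*n+1 := by
    by_contra h
    push_neg at h
    nlinarith
  have hb2 : (2*(n:ℝ)+1) ≤ 2 := by nlinarith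
  have hn1 : (0:ℤ) < 2*n+1 := by exact_mod_cast hb1
  have hn2 : (2*n+1 : ℤ) ≤ 2 := by exact_mod_cast hb2
  have : n = 0 := by omega
  rw [this] at hne
  simp at hne

lemma inner_eq {α : ℝ} (hmem : α ∈ Ioc 0 π) (hne : Real.cos α ≠ 0) :
    (∫ β in (0:ℝ)..(2*π), Ffun β α) = Kfun α := by
  have hpi := Real.pi_pos
  have hconst : ∀ β : ℝ, Ffun β α
      = ((1/(16*π)) * Real.sin α * (Real.sin (α/2)) ^ (-3:ℤ))
        * (Real.log (Real.cos β^2 + |Real.cos α|^2 * Real.sin β^2) / 2) := by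
    intro β
    unfold Ffun
    have hg0 : (0:ℝ) ≤ Real.cos β^2 + Real.sin β^2 * Real.cos α^2 := by positivity
    rw [Real.log_sqrt hg0]
    rw [show Real.cos β^2 + Real.sin β^2 * Real.cos α^2
      = Real.cos β^2 + |Real.cos α|^2 * Real.sin β^2 by rw [sq_abs]; ring]
  simp only [hconst]
  rw [intervalIntegral.integral_const_mul]
  rw [intervalIntegral.integral_div]
  rw [betaInt (abs_pos.mpr hne) (Real.abs_cos_le_one α)]
  unfold Kfun
  have hπne : (π:ℝ) ≠ 0 := Real.pi_ne_zero
  have h8 : (1/(16*π)) * (4*π/2) = 1/8 := by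
    field_simp
    ring
  calc (1/(16*π)) * Real.sin α * (Real.sin (α/2)) ^ (-3:ℤ)
        * (4*π*Real.log ((1+|Real.cos α|)/2) / 2)
      = ((1/(16*π)) * (4*π/2))
        * (Real.sin α * (Real.sin (α/2)) ^ (-3:ℤ) * Real.log ((1+|Real.cos α|)/2)) := by
        ring
  _ = (1/8) * (Real.sin α * (Real.sin (α/2)) ^ (-3:ℤ) * Real.log ((1+|Real.cos α|)/2)) := by
        rw [h8]
  _ = (1/8) * Real.sin α * (Real.sin (α/2)) ^ (-3:ℤ) * Real.log ((1+|Real.cos α|)/2) := by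
        ring

lemma F_uncurry_meas : Measurable (Function.uncurry Ffun) := by
  have h3 : ∀ x : ℝ, x^(-3:ℤ) = (x^3)⁻¹ := fun x => by rw [zpow_neg, zpow_ofNat]
  unfold Function.uncurry Ffun
  simp only [h3]
  apply Measurable.mul
  · apply Measurable.mul
    · exact (Real.measurable_sin.comp measurable_snd).const_mul _
    · exact ((Real.measurable_sin.comp (measurable_snd.div_const 2)).pow_const 3).inv
  · apply Real.measurable_log.comp
    apply Measurable.sqrt
    apply Measurable.add
    · exact (Real.measurable_cos.comp measurable_fst).pow_const 2
    · exact ((Real.measurable_sin.comp measurable_fst).pow_const 2).mul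
        ((Real.measurable_cos.comp measurable_snd).pow_const 2)

lemma F_section_int {α : ℝ} (hne : Real.cos α ≠ 0) :
    Integrable (fun β => Ffun β α) (volume.restrict (Ioc 0 (2*π))) := by
  have hc2 : (0:ℝ) < Real.cos α^2 := by positivity
  apply Continuous.integrableOn_Ioc
  unfold Ffun
  apply Continuous.mul continuous_const
  apply Continuous.log
  · apply Real.continuous_sqrt.comp
    continuity
  · intro β
    have := g_ge β α
    exact (Real.sqrt_pos.mpr (by linarith)).ne'

lemma F_nonpos {α : ℝ} (hmem : α ∈ Ioc 0 π) (β : ℝ) : Ffun β α ≤ 0 := by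
  obtain ⟨h0, hπ⟩ := hmem
  have hpi := Real.pi_pos
  unfold Ffun
  apply mul_nonpos_iff.mpr
  apply Or.inl
  constructor
  · have hsin : 0 ≤ Real.sin α := Real.sin_nonneg_of_nonneg_of_le_pi h0.le hπ
    have hs : 0 ≤ Real.sin (α/2) :=
      Real.sin_nonneg_of_nonneg_of_le_pi (by linarith) (by linarith)
    have hq : 0 ≤ (Real.sin (α/2)) ^ (-3:ℤ) := by
      rw [zpow_neg, zpow_ofNat]
      positivity
    have hc : (0:ℝ) ≤ 1/(16*π) := by positivity
    positivity
  · apply Real.log_nonpos (Real.sqrt_nonneg _)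
    rw [show (1:ℝ) = Real.sqrt 1 by simp]
    exact Real.sqrt_le_sqrt (g_le_one β α)

lemma norm_int_eq {α : ℝ} (hmem : α ∈ Ioc 0 π) (hne : Real.cos α ≠ 0) :
    (∫ β in Ioc (0:ℝ) (2*π), ‖Ffun β α‖) = -Kfun α := by
  have hpi := Real.pi_pos
  have h1 : ∀ β : ℝ, ‖Ffun β α‖ = -Ffun β α := fun β => by
    rw [Real.norm_eq_abs, abs_of_nonpos (F_nonpos hmem β)]
  calc (∫ β in Ioc (0:ℝ) (2*π), ‖Ffun β α‖)
      = ∫ β in Ioc (0:ℝ) (2*π), -Ffun β α := by simp only [h1]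
  _ = -∫ β in Ioc (0:ℝ) (2*π), Ffun β α := by rw [MeasureTheory.integral_neg]
  _ = -Kfun α := by
      rw [← intervalIntegral.integral_of_le (by linarith : (0:ℝ) ≤ 2*π)]
      rw [inner_eq hmem hne]

lemma ae_ne_pihalf : ∀ᵐ α ∂(volume.restrict (Ioc (0:ℝ) π)), α ≠ π/2 := by
  apply MeasureTheory.ae_restrict_of_ae
  rw [MeasureTheory.ae_iff]
  convert Real.volume_singleton (a := π/2) using 2
  ext x
  simp

lemma F_prod_integrable : Integrable (Function.uncurry Ffun)
    ((volume.restrict (Ioc (0:ℝ) (2*π))).prod (volume.restrict (Ioc (0:ℝ) π))) := by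
  rw [MeasureTheory.integrable_prod_iff' F_uncurry_meas.aestronglyMeasurable]
  constructor
  · filter_upwards [MeasureTheory.ae_restrict_mem measurableSet_Ioc, ae_ne_pihalf]
      with α hα hαne
    exact F_section_int (cos_ne_zero_of hα hαne)
  · apply MeasureTheory.Integrable.congr K_integrableOn.neg
    filter_upwards [MeasureTheory.ae_restrict_mem measurableSet_Ioc, ae_ne_pihalf]
      with α hα hαne
    exact (norm_int_eq hα (cos_ne_zero_of hα hαne)).symm

/-- The Lyapunov excursion integral for the exterior of the unit ball in ℝ³:
∫₀^{2π} ∫₀^π (1/(16π)) sin α (sin(α/2))^{-3} log√(cos²β + sin²β cos²α) dα dβ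
  = √2 − 1 − log(1 + √2). -/
theorem stmt_0 :
    (∫ β in (0:ℝ)..(2*π), ∫ α in (0:ℝ)..π,
      (1/(16*π)) * Real.sin α * (Real.sin (α/2)) ^ (-3 : ℤ) *
        Real.log (Real.sqrt (Real.cos β ^ 2 + Real.sin β ^ 2 * Real.cos α ^ 2)))
    = Real.sqrt 2 - 1 - Real.log (1 + Real.sqrt 2) := by
  have hpi := Real.pi_pos
  have h0 : (∫ β in (0:ℝ)..(2*π), ∫ α in (0:ℝ)..π,
      (1/(16*π)) * Real.sin α * (Real.sin (α/2)) ^ (-3 : ℤ) *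
        Real.log (Real.sqrt (Real.cos β ^ 2 + Real.sin β ^ 2 * Real.cos α ^ 2)))
      = ∫ β in (0:ℝ)..(2*π), ∫ α in (0:ℝ)..π, Ffun β α := rfl
  rw [h0]
  rw [intervalIntegral.integral_of_le (by linarith : (0:ℝ) ≤ 2*π)]
  simp only [intervalIntegral.integral_of_le hpi.le]
  have hsw := MeasureTheory.integral_integral_swap (f := Ffun)
    (μ := volume.restrict (Ioc (0:ℝ) (2*π))) (ν := volume.restrict (Ioc (0:ℝ) π))
    F_prod_integrable
  rw [hsw]
  have hswap_eq : (∫ α in Ioc (0:ℝ) π, (∫ β in Ioc (0:ℝ) (2*π), Ffun β α))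
      = ∫ α in Ioc (0:ℝ) π, Kfun α := by
    apply MeasureTheory.integral_congr_ae
    filter_upwards [MeasureTheory.ae_restrict_mem measurableSet_Ioc, ae_ne_pihalf]
      with α hα hαne
    rw [← intervalIntegral.integral_of_le (by linarith : (0:ℝ) ≤ 2*π)]
    exact inner_eq hα (cos_ne_zero_of hα hαne)
  rw [hswap_eq]
  rw [← intervalIntegral.integral_of_le hpi.le]
  exact alphaInt
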